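/- arXiv:1610.08393 — 4 statements merged into one kernel-verified Lean document; each statement's English description precedes it below -/
import Mathlib

section
/- Let p be a prime, ζ a primitive p-th root of unity, and α = C₀ + C₁ζ + ⋯ + C_{p−1}ζ^{p−1} with all Cᵢ ∈ ℤ. If α/p is an algebraic integer (equivalently, α lies in p·ℤ[ζ]), then Cᵢ ≡ Cⱼ (mod p) for all i, j. -/
open Polynomial Finset

/-- If `α = C₀ + C₁ζ + ⋯ + C_{p−1}ζ^{p−1}` with integer coefficients and `α/p`
lies in `ℤ[ζ]`, then all the `Cᵢ` are congruent mod `p`. -/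
theorem coeffs_congruent_of_div_p_integral (p : ℕ) [hp : Fact p.Prime] (ζ : ℂ)
    (hζ : IsPrimitiveRoot ζ p) (C : Fin p → ℤ)
    (h : (∑ i : Fin p, (C i : ℂ) * ζ ^ (i : ℕ)) / (p : ℂ) ∈ Algebra.adjoin ℤ ({ζ} : Set ℂ)) :
    ∀ i j, C i ≡ C j [ZMOD (p : ℤ)] := by
  have hp1 : 1 < p := hp.out.one_lt
  have hp0 : 0 < p := by omega
  have hint : IsIntegral ℤ ζ := hζ.isIntegral hp0
  have hmin : minpoly ℤ ζ = cyclotomic p ℤ := (cyclotomic_eq_minpoly hζ hp0).symm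
  have hmon : (minpoly ℤ ζ).Monic := minpoly.monic hint
  have hdeg : (minpoly ℤ ζ).natDegree = p - 1 := by
    rw [hmin, natDegree_cyclotomic, Nat.totient_prime hp.out]
  rw [Algebra.adjoin_singleton_eq_range_aeval] at h
  obtain ⟨q, hq⟩ := h
  set r := q %ₘ (minpoly ℤ ζ) with hrdef
  have hrdeg : r.degree < ((p - 1 : ℕ) : WithBot ℕ) := by
    have := degree_modByMonic_lt q hmon
    rwa [degree_eq_natDegree hmon.ne_zero, hdeg] at this
  have hraeval : (aeval ζ) r = (∑ i : Fin p, (C i : ℂ) * ζ ^ (i : ℕ)) / (p : ℂ) := by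
    conv_rhs => rw [← hq, ← modByMonic_add_div q (minpoly ℤ ζ)]
    simp only [AlgHom.toRingHom_eq_coe, RingHom.coe_coe, map_add, map_mul, minpoly.aeval, zero_mul, add_zero, hrdef]
  set D : ℕ → ℤ := fun i => if h : i < p then C ⟨i, h⟩ else 0 with hD
  have hsum : (∑ i : Fin p, (C i : ℂ) * ζ ^ (i : ℕ)) = ∑ i ∈ range p, (D i : ℂ) * ζ ^ i := by
    rw [← Fin.sum_univ_eq_sum_range (fun i => (D i : ℂ) * ζ ^ i) p]
    refine Finset.sum_congr rfl fun i _ => ?_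
    simp [hD, i.isLt]
  set f : ℤ[X] := (∑ i ∈ range p, Polynomial.C (D i) * X ^ i) - Polynomial.C (p : ℤ) * r
      - Polynomial.C (D (p - 1)) * (∑ i ∈ range p, X ^ i) with hf
  have hpC : (p : ℂ) ≠ 0 := by exact_mod_cast hp0.ne'
  have hfaeval : (aeval ζ) f = 0 := by
    have hgeom : (∑ i ∈ range p, ζ ^ i) = 0 := hζ.geom_sum_eq_zero hp1
    have h1 : (∑ i ∈ range p, ((D i : ℂ)) * ζ ^ i) = (p : ℂ) * (aeval ζ) r := by
      rw [hraeval, ← hsum, mul_div_cancel₀ _ hpC]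
    rw [hf]
    simp only [map_sub, map_mul, map_sum, map_pow, aeval_X, aeval_C]
    simp only [algebraMap_int_eq, eq_intCast, Int.cast_natCast]
    rw [h1, hgeom]
    ring
  have hrcoeff : ∀ m, p - 1 ≤ m → r.coeff m = 0 := fun m hm =>
    coeff_eq_zero_of_degree_lt (lt_of_lt_of_le hrdeg (by exact_mod_cast hm))
  have hcoeff1 : ∀ j, (∑ i ∈ range p, Polynomial.C (D i) * X ^ i).coeff j
      = if j < p then D j else 0 := by
    intro j
    simp only [finset_sum_coeff, coeff_C_mul, coeff_X_pow, mul_ite, mul_one, mul_zero]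
    simp [Finset.sum_ite_eq, Finset.sum_ite_eq', Finset.mem_range]
  have hcoeff2 : ∀ j, (∑ i ∈ range p, (X : ℤ[X]) ^ i).coeff j = if j < p then 1 else 0 := by
    intro j
    simp only [finset_sum_coeff, coeff_X_pow]
    simp [Finset.sum_ite_eq, Finset.sum_ite_eq', Finset.mem_range]
  have hfdeg : f.degree < ((p - 1 : ℕ) : WithBot ℕ) := by
    rw [degree_lt_iff_coeff_zero]
    intro m hm
    rw [hf]
    simp only [coeff_sub, coeff_C_mul, hcoeff1, hcoeff2, hrcoeff m hm]
    by_cases hmp : m < p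
    · have : m = p - 1 := by omega
      subst this
      simp [hmp]
    · simp [hmp]
  have hdvd : minpoly ℤ ζ ∣ f := minpoly.isIntegrallyClosed_dvd hint hfaeval
  have hf0 : f = 0 := by
    by_contra hne
    have := degree_le_of_dvd hdvd hne
    rw [degree_eq_natDegree hmon.ne_zero, hdeg] at this
    exact absurd (lt_of_le_of_lt this hfdeg) (lt_irrefl _)
  -- read off congruences
  have key : ∀ i : Fin p, C i ≡ D (p - 1) [ZMOD (p : ℤ)] := by
    intro i
    have hc := congrArg (fun g => Polynomial.coeff g (i : ℕ)) hf0
    simp only [hf, coeff_sub, coeff_C_mul, hcoeff1, hcoeff2, coeff_zero] at hc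
    rw [if_pos i.isLt, if_pos i.isLt] at hc
    have hDi : D (i : ℕ) = C i := by simp [hD, i.isLt]
    rw [hDi] at hc
    refine Int.modEq_iff_dvd.2 ?_
    have heq : D (p - 1) - C i = -((p : ℤ) * r.coeff i) := by linarith
    rw [heq]
    exact dvd_neg.2 ⟨r.coeff i, rfl⟩
  intro i j
  exact (key i).trans (key j).symm
end

section
/- Let p be prime, ζ a primitive p-th root of unity, and C₀,…,C_{p−1} integers with 0 ≤ Cᵢ ≤ p for all i, C₀ ≥ 2, and ΣCᵢ = p. If C₀ + C₁ζ + ⋯ + C_{p−1}ζ^{p−1} lies in p·ℤ[ζ], then C₀ = p and Cᵢ = 0 for all i ≠ 0. -/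
open Polynomial Finset

/-- If `0 ≤ Cᵢ ≤ p`, `C₀ ≥ 2`, `ΣCᵢ = p` and `C₀ + C₁ζ + ⋯ + C_{p−1}ζ^{p−1} ∈ p·ℤ[ζ]`,
then `C₀ = p` and `Cᵢ = 0` for `i ≠ 0`. -/
theorem coeffs_concentrated (p : ℕ) [hp : Fact p.Prime] (ζ : ℂ)
    (hζ : IsPrimitiveRoot ζ p) (C : Fin p → ℤ)
    (h0 : ∀ i, 0 ≤ C i) (h1 : ∀ i, C i ≤ (p : ℤ)) (h2 : 2 ≤ C 0)
    (hsum : ∑ i, C i = (p : ℤ))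
    (hdvd : (∑ i : Fin p, (C i : ℂ) * ζ ^ (i : ℕ)) / (p : ℂ) ∈ Algebra.adjoin ℤ ({ζ} : Set ℂ)) :
    C 0 = (p : ℤ) ∧ ∀ i, i ≠ 0 → C i = 0 := by
  have hpp := hp.out
  have hp0 : 0 < p := hpp.pos
  have hp2 : 2 ≤ p := hpp.two_le
  have hpC : (p : ℂ) ≠ 0 := Nat.cast_ne_zero.mpr hpp.ne_zero
  set D : ℕ → ℤ := fun i => if h : i < p then C ⟨i, h⟩ else 0 with hDdef
  have hDC : ∀ i : Fin p, D (i : ℕ) = C i := by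
    intro i; simp [hDdef, i.isLt]
  -- Step 1: key divisibility
  have key : ∀ i : Fin p, (p : ℤ) ∣ C i - C 0 := by
    rw [Algebra.adjoin_singleton_eq_range_aeval] at hdvd
    obtain ⟨q, hq⟩ := hdvd
    set m : Polynomial ℤ := X ^ p - 1 with hm
    have hmono : m.Monic := by
      have := Polynomial.monic_X_pow_sub_C (1 : ℤ) hp0.ne'
      simpa [hm] using this
    set r : Polynomial ℤ := q %ₘ m with hr
    have hdeg : r.natDegree < p := by
      rcases eq_or_ne r 0 with h | h
      · simp [h, hp0]
      · rw [Polynomial.natDegree_lt_iff_degree_lt h]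
        have hmd : m.degree = (p : ℕ) := by
          have := Polynomial.degree_X_pow_sub_C hp0 (1 : ℤ)
          simpa [hm] using this
        simpa [hmd] using Polynomial.degree_modByMonic_lt q hmono
    have haer : (Polynomial.aeval ζ) r = (Polynomial.aeval ζ) q := by
      conv_rhs => rw [← Polynomial.modByMonic_add_div q m]
      simp [hr, hm, hζ.pow_eq_one]
    have h1' : (Polynomial.aeval ζ) r = ∑ i ∈ Finset.range p, (r.coeff i : ℂ) * ζ ^ i := by
      rw [Polynomial.aeval_eq_sum_range' hdeg]
      simp [zsmul_eq_mul]
    have h2' : ∑ i : Fin p, (C i : ℂ) * ζ ^ (i : ℕ) =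
        ∑ i ∈ Finset.range p, (D i : ℂ) * ζ ^ i := by
      rw [← Fin.sum_univ_eq_sum_range (fun i => (D i : ℂ) * ζ ^ i) p]
      exact Finset.sum_congr rfl fun i _ => by rw [hDC]
    have h3 : ∑ i ∈ Finset.range p, (D i : ℂ) * ζ ^ i =
        (p : ℂ) * ∑ i ∈ Finset.range p, (r.coeff i : ℂ) * ζ ^ i := by
      have hq' : (Polynomial.aeval ζ) q = (∑ i : Fin p, (C i : ℂ) * ζ ^ (i : ℕ)) / (p : ℂ) := hq
      rw [← h1', haer, hq', ← h2']
      field_simp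
    have hsum' : ∑ i ∈ Finset.range p, ((D i : ℂ) - p * r.coeff i) * ζ ^ i = 0 := by
      have : ∑ i ∈ Finset.range p, ((D i : ℂ) - p * r.coeff i) * ζ ^ i =
          ∑ i ∈ Finset.range p, (D i : ℂ) * ζ ^ i -
            (p : ℂ) * ∑ i ∈ Finset.range p, (r.coeff i : ℂ) * ζ ^ i := by
        rw [Finset.mul_sum, ← Finset.sum_sub_distrib]
        exact Finset.sum_congr rfl fun i _ => by ring
      rw [this, h3, sub_self]
    set d : Polynomial ℤ := ∑ i ∈ Finset.range p, Polynomial.C (D i - p * r.coeff i) * X ^ i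
      with hd
    have hdz : (Polynomial.aeval ζ) d = 0 := by
      rw [hd]
      simp only [map_sum, map_mul, Polynomial.aeval_C, map_pow, Polynomial.aeval_X,
        map_sub, map_intCast, algebraMap_int_eq, eq_intCast]
      rw [← hsum']
      exact Finset.sum_congr rfl fun i _ => by push_cast; ring
    have hcoeff : ∀ j, j < p → d.coeff j = D j - p * r.coeff j := by
      intro j hj
      rw [hd, Polynomial.finset_sum_coeff]
      simp only [Polynomial.coeff_C_mul, Polynomial.coeff_X_pow, mul_ite, mul_one, mul_zero]
      rw [Finset.sum_ite_eq]
      simp [hj]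
    have hddeg : d.natDegree ≤ p - 1 := by
      apply Polynomial.natDegree_sum_le_of_forall_le
      intro i hi
      refine le_trans (Polynomial.natDegree_C_mul_le _ _) ?_
      rw [Polynomial.natDegree_X_pow]
      have := Finset.mem_range.mp hi
      omega
    set dQ : Polynomial ℚ := d.map (algebraMap ℤ ℚ) with hdQ
    have hmin : Polynomial.cyclotomic p ℚ ∣ dQ := by
      rw [Polynomial.cyclotomic_eq_minpoly_rat hζ hp0]
      apply minpoly.dvd
      rw [hdQ, Polynomial.aeval_map_algebraMap]
      exact hdz
    have hcoeffQ : ∀ j, dQ.coeff j = (d.coeff j : ℚ) := by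
      intro j; simp [hdQ]
    have hconst : ∀ j, j < p → dQ.coeff j = dQ.coeff 0 := by
      rcases eq_or_ne dQ 0 with h | h
      · intro j _; simp [h]
      · obtain ⟨g, hg⟩ := hmin
        have hΦM : (Polynomial.cyclotomic p ℚ).Monic := Polynomial.cyclotomic.monic p ℚ
        have hΦdeg : (Polynomial.cyclotomic p ℚ).natDegree = p - 1 := by
          rw [Polynomial.natDegree_cyclotomic, Nat.totient_prime hpp]
        have hgne : g ≠ 0 := by
          rintro rfl; rw [mul_zero] at hg; exact h hg
        have hdQdeg : dQ.natDegree ≤ p - 1 :=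
          le_trans Polynomial.natDegree_map_le hddeg
        have hgdeg : g.natDegree = 0 := by
          have := Polynomial.natDegree_mul hΦM.ne_zero hgne
          rw [← hg, hΦdeg] at this
          omega
        obtain ⟨c, hc⟩ := Polynomial.natDegree_eq_zero.mp hgdeg
        have hΦcoeff : ∀ j, j < p → (Polynomial.cyclotomic p ℚ).coeff j = 1 := by
          intro j hj
          rw [Polynomial.cyclotomic_prime, Polynomial.finset_sum_coeff]
          simp only [Polynomial.coeff_X_pow]
          rw [Finset.sum_ite_eq]
          simp [hj]
        intro j hj
        rw [hg, ← hc, Polynomial.coeff_mul_C, Polynomial.coeff_mul_C,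
          hΦcoeff j hj, hΦcoeff 0 hp0]
    intro i
    have hkey : d.coeff (i : ℕ) = d.coeff 0 := by
      have := hconst (i : ℕ) i.isLt
      rw [hcoeffQ, hcoeffQ] at this
      exact_mod_cast this
    rw [hcoeff _ i.isLt, hcoeff 0 hp0, hDC] at hkey
    have hD0 : D 0 = C 0 := hDC 0
    rw [hD0] at hkey
    exact ⟨r.coeff (i : ℕ) - r.coeff 0, by linarith [hkey, mul_sub (p : ℤ) (r.coeff i) (r.coeff 0)]⟩
  -- Step 2: arithmetic
  have hC0 : C 0 = (p : ℤ) := by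
    by_contra hne
    have hlt : C 0 < (p : ℤ) := lt_of_le_of_ne (h1 0) hne
    have hall : ∀ i, C i = C 0 := by
      intro i
      have habs : |C i - C 0| < (p : ℤ) := by
        rw [abs_lt]
        have := h0 i; have := h1 i
        omega
      have := Int.eq_zero_of_abs_lt_dvd (key i) habs
      omega
    have : ∑ i, C i = (p : ℤ) * C 0 := by
      rw [Finset.sum_congr rfl fun i _ => hall i]
      simp [Finset.sum_const, Finset.card_univ, mul_comm]
    rw [hsum] at this
    have hC1 : C 0 = 1 := by
      have hpz : (p : ℤ) ≠ 0 := by exact_mod_cast hpp.ne_zero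
      have := mul_left_cancel₀ hpz (show (p : ℤ) * C 0 = (p : ℤ) * 1 by linarith)
      exact this
    omega
  refine ⟨hC0, ?_⟩
  have hrest : ∑ i ∈ Finset.univ.erase 0, C i = 0 := by
    have := Finset.add_sum_erase Finset.univ C (Finset.mem_univ (0 : Fin p))
    rw [hsum] at this
    omega
  intro i hi
  exact (Finset.sum_eq_zero_iff_of_nonneg (fun j _ => h0 j)).mp hrest i
    (Finset.mem_erase.mpr ⟨hi, Finset.mem_univ i⟩)
end

section
/- Let G = ℤ/pℤ for p prime with irreducible characters χ_a(b) = ζ^(ab). Suppose I is a bijection of Irr(G) fixing χ_0 and χ_1 such that Σ_{r=0}^{p−1} I(χ_r)(1) χ_r(−1) lies in p·ℤ[ζ] (where 1, −1 ∈ ℤ/pℤ). Then I is the identity on Irr(G). -/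
open Polynomial Finset

/-- The character `χ_a(b) = ζ^(ab)` of `ℤ/pℤ`. -/
noncomputable def chi (p : ℕ) (ζ : ℂ) (a b : ZMod p) : ℂ := ζ ^ (a * b).val

/-- A permutation of `Irr(ℤ/pℤ)` fixing `χ₀` and `χ₁` such that
`∑_r I(χ_r)(1) χ_r(−1) ∈ p·ℤ[ζ]` is the identity. -/
theorem perm_fixing_two_chars_is_id (p : ℕ) [Fact p.Prime] (ζ : ℂ)
    (hζ : IsPrimitiveRoot ζ p) (f : Equiv.Perm (ZMod p))
    (h0 : f 0 = 0) (h1 : f 1 = 1)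
    (h : (∑ r : ZMod p, chi p ζ (f r) 1 * chi p ζ r (-1)) / (p : ℂ)
        ∈ Algebra.adjoin ℤ ({ζ} : Set ℂ)) :
    ∀ r, f r = r := by
  have hp : p.Prime := Fact.out
  have hp1 : 1 < p := hp.one_lt
  have hp0 : 0 < p := hp.pos
  have hζp : ζ ^ p = 1 := hζ.pow_eq_one
  have hpC : (p : ℂ) ≠ 0 := Nat.cast_ne_zero.mpr hp.ne_zero
  have hpowmod : ∀ n : ℕ, ζ ^ n = ζ ^ (n % p) := by
    intro n
    conv_lhs => rw [← Nat.mod_add_div n p]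
    rw [pow_add, pow_mul, hζp, one_pow, mul_one]
  have hadd : ∀ a b : ZMod p, ζ ^ (a + b).val = ζ ^ a.val * ζ ^ b.val := by
    intro a b
    rw [← pow_add, ZMod.val_add, ← hpowmod]
  classical
  set g : ZMod p → ZMod p := fun r => f r - r with hg
  set c : ZMod p → ℕ := fun j => (univ.filter fun r => g r = j).card with hc
  -- total count
  have hsum_c : ∑ j : ZMod p, c j = p := by
    have := Finset.card_eq_sum_card_fiberwise
      (f := g) (s := univ) (t := univ) (fun x _ => mem_univ _)
    rw [Finset.card_univ, ZMod.card] at this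
    exact this.symm
  -- c 0 ≥ 2
  have hc0 : 2 ≤ c 0 := by
    have hsub : ({0, 1} : Finset (ZMod p)) ⊆ univ.filter fun r => g r = 0 := by
      intro x hx
      simp only [Finset.mem_insert, Finset.mem_singleton] at hx
      rcases hx with rfl | rfl <;>
        simp [hg, h0, h1]
    have hcard : ({0, 1} : Finset (ZMod p)).card = 2 := by
      rw [Finset.card_insert_of_notMem (by simp [(zero_ne_one (α := ZMod p))]),
        Finset.card_singleton]
    calc 2 = ({0, 1} : Finset (ZMod p)).card := hcard.symm
      _ ≤ _ := Finset.card_le_card hsub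
  -- the sum S
  set S : ℂ := ∑ r : ZMod p, chi p ζ (f r) 1 * chi p ζ r (-1) with hSdef
  have hS : S = ∑ j : ZMod p, (c j : ℂ) * ζ ^ j.val := by
    have hterm : ∀ r : ZMod p, chi p ζ (f r) 1 * chi p ζ r (-1) = ζ ^ (g r).val := by
      intro r
      have : f r + (-r) = g r := by rw [hg]; ring
      simp only [chi, mul_one, mul_neg_one]
      rw [← this, hadd]
    rw [hSdef, Finset.sum_congr rfl fun r _ => hterm r,
      ← Finset.sum_fiberwise univ g (fun r => ζ ^ (g r).val)]
    refine Finset.sum_congr rfl fun j _ => ?_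
    rw [Finset.sum_congr rfl (fun r hr => by rw [(Finset.mem_filter.mp hr).2]),
      Finset.sum_const, nsmul_eq_mul, hc]
  -- get the integer polynomial
  rw [Algebra.adjoin_singleton_eq_range_aeval] at h
  obtain ⟨q, hq0⟩ := h
  have hq : aeval ζ q = S / p := hq0
  have hmonic : (X ^ p - C (1 : ℤ)).Monic := monic_X_pow_sub_C 1 hp.ne_zero
  set q' : ℤ[X] := q %ₘ (X ^ p - C 1) with hq'def
  have haevalq' : aeval ζ q' = S / p := by
    rw [← hq]
    conv_rhs => rw [← Polynomial.modByMonic_add_div q (X ^ p - C 1)]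
    rw [map_add, map_mul, map_sub, map_pow, aeval_X, aeval_C, hζp]
    simp [hq'def]
  have hdegq' : q'.natDegree < p := by
    by_cases hq0 : q' = 0
    · rw [hq0]; simpa using hp0
    · rw [Polynomial.natDegree_lt_iff_degree_lt hq0]
      have := Polynomial.degree_modByMonic_lt q hmonic
      rw [Polynomial.degree_X_pow_sub_C hp0] at this
      exact this
  -- the key polynomial
  set A : ℤ[X] := (∑ k ∈ range p, C ((c (k : ZMod p) : ℤ)) * X ^ k) - C (p : ℤ) * q'
    with hAdef
  have hsum_eq : (∑ k ∈ range p, ((c (k : ZMod p) : ℂ)) * ζ ^ k)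
      = ∑ j : ZMod p, (c j : ℂ) * ζ ^ j.val := by
    refine Finset.sum_nbij' (fun k => (k : ZMod p)) (fun j => j.val) ?_ ?_ ?_ ?_ ?_
    · intro k _; exact mem_univ _
    · intro j _; exact Finset.mem_range.mpr (ZMod.val_lt j)
    · intro k hk; exact ZMod.val_cast_of_lt (Finset.mem_range.mp hk)
    · intro j _; exact ZMod.natCast_rightInverse j
    · intro k hk
      rw [ZMod.val_cast_of_lt (Finset.mem_range.mp hk)]
  have haevalA : aeval ζ A = 0 := by
    rw [hAdef, map_sub, map_mul, aeval_C]
    have h1' : aeval ζ (∑ k ∈ range p, C ((c (k : ZMod p) : ℤ)) * X ^ k)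
        = ∑ j : ZMod p, (c j : ℂ) * ζ ^ j.val := by
      rw [map_sum]
      simp only [map_mul, aeval_C, map_pow, aeval_X]
      rw [← hsum_eq]
      norm_num
    rw [h1', haevalq', ← hS]
    push_cast
    rw [mul_div_cancel₀ S hpC, sub_self]
  have hint : IsIntegral ℤ ζ := ⟨X ^ p - C 1, hmonic, by simp [hζp]⟩
  have hdvd : cyclotomic p ℤ ∣ A := by
    rw [Polynomial.cyclotomic_eq_minpoly hζ hp0]
    exact minpoly.isIntegrallyClosed_dvd hint haevalA
  -- degree bound on A
  have hdegA : A.natDegree ≤ p - 1 := by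
    rw [hAdef]
    refine le_trans (Polynomial.natDegree_sub_le _ _) (max_le ?_ ?_)
    · refine Polynomial.natDegree_sum_le_of_forall_le _ _ fun k hk => ?_
      refine le_trans (Polynomial.natDegree_C_mul_le _ _) ?_
      rw [Polynomial.natDegree_X_pow]
      have := Finset.mem_range.mp hk
      omega
    · refine le_trans (Polynomial.natDegree_C_mul_le _ _) ?_
      omega
  -- A = C d * cyclotomic
  obtain ⟨d, hAd⟩ : ∃ d : ℤ, A = C d * cyclotomic p ℤ := by
    obtain ⟨R, hR⟩ := hdvd
    by_cases hA0 : A = 0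
    · exact ⟨0, by simp [hA0]⟩
    · have hR0 : R ≠ 0 := by rintro rfl; simp [hR] at hA0
      have hdeg : A.natDegree = (p - 1) + R.natDegree := by
        rw [hR, Polynomial.natDegree_mul (cyclotomic_ne_zero p ℤ) hR0,
          natDegree_cyclotomic, Nat.totient_prime hp]
      have : R.natDegree = 0 := by omega
      exact ⟨R.coeff 0, by rw [hR, ← Polynomial.eq_C_of_natDegree_eq_zero this, mul_comm]⟩
  -- coefficient extraction: for k < p, c (k) - p * q'.coeff k = d
  have hcoef : ∀ k < p, (c (k : ZMod p) : ℤ) - (p : ℤ) * q'.coeff k = d := by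
    intro k hk
    have hL : A.coeff k = (c (k : ZMod p) : ℤ) - (p : ℤ) * q'.coeff k := by
      rw [hAdef, Polynomial.coeff_sub, Polynomial.coeff_C_mul,
        Polynomial.finset_sum_coeff]
      congr 1
      simp only [Polynomial.coeff_C_mul, Polynomial.coeff_X_pow]
      rw [Finset.sum_eq_single k (fun b _ hb => by simp [Ne.symm hb]) (fun hnk => absurd (Finset.mem_range.mpr hk) hnk)]
      simp
    have hRc : A.coeff k = d := by
      rw [hAd, Polynomial.coeff_C_mul, Polynomial.cyclotomic_prime ℤ p,
        Polynomial.finset_sum_coeff]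
      simp only [Polynomial.coeff_X_pow]
      rw [Finset.sum_eq_single k (fun b _ hb => by simp [Ne.symm hb]) (fun hnk => absurd (Finset.mem_range.mpr hk) hnk)]
      simp
    rw [← hL, hRc]
  have hkey : ∀ j : ZMod p, (p : ℤ) ∣ (c j : ℤ) - d := by
    intro j
    have := hcoef j.val (ZMod.val_lt j)
    rw [ZMod.natCast_rightInverse j] at this
    exact ⟨q'.coeff j.val, by linarith⟩
  -- counting argument
  have hfinal : c 0 = p := by
    by_cases hd : (p : ℤ) ∣ d
    · -- p ∣ c j for all j; c 0 ≥ 2 so c 0 ≥ p; also c 0 ≤ p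
      have hpc0 : (p : ℤ) ∣ (c 0 : ℤ) := by
        have := (hkey 0).add hd
        simpa using this
      have hpc0' : p ∣ c 0 := Int.ofNat_dvd.mp (by exact_mod_cast hpc0)
      have hle : c 0 ≤ p := by
        calc c 0 ≤ Finset.univ.card := Finset.card_filter_le _ _
          _ = p := by rw [Finset.card_univ, ZMod.card]
      have := Nat.le_of_dvd (by omega) hpc0'
      omega
    · -- each c j ≥ 1, sum = p, c 0 ≥ 2: contradiction
      exfalso
      have hpos : ∀ j : ZMod p, 1 ≤ c j := by
        intro j
        by_contra hcj
        push_neg at hcj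
        interval_cases h : c j
        · apply hd
          have := hkey j
          rw [h] at this
          simpa using (dvd_neg.mp (by simpa using this))
      have hbound : ∀ j : ZMod p, (if j = 0 then 2 else 1) ≤ c j := by
        intro j
        by_cases hj : j = 0
        · simp [hj, hc0]
        · simp [hj, hpos j]
      have hsplit : (∑ j : ZMod p, (if j = 0 then 2 else 1)) = p + 1 := by
        have hterm : ∀ j : ZMod p, (if j = 0 then 2 else 1) = (if j = 0 then 1 else 0) + 1 := by
          intro j; split <;> rfl
        rw [Finset.sum_congr rfl fun j _ => hterm j, Finset.sum_add_distrib,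
          Finset.sum_ite_eq' Finset.univ (0 : ZMod p) (fun _ => 1)]
        simp [ZMod.card, Nat.add_comm]
      have hge : p + 1 ≤ ∑ j : ZMod p, c j := by
        rw [← hsplit]
        exact Finset.sum_le_sum fun j _ => hbound j
      omega
  -- conclude
  have huniv : (univ.filter fun r => g r = 0) = univ := by
    apply Finset.eq_univ_of_card
    rw [show (univ.filter fun r => g r = 0).card = c 0 from rfl, hfinal, ZMod.card]
  intro r
  have : r ∈ univ.filter fun r => g r = 0 := by rw [huniv]; exact mem_univ r
  have := (Finset.mem_filter.mp this).2
  rw [hg] at this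
  exact sub_eq_zero.mp this
end

section
/- Let G = ℤ/pℤ for p prime. Any permutation I of Irr(G) such that for all m, n ∈ ℤ/pℤ with m ≠ 0 and n ≠ 0, the sum Σ_{r=0}^{p−1} I(χ_r)(m) χ_r(n) lies in p·ℤ[ζ], is of the form χ ↦ λ·(χ∘σ) for some linear character λ ∈ Irr(G) and some automorphism σ of G. -/
open Polynomial in
theorem count_cong (p : ℕ) [Fact p.Prime] (ζ : ℂ) (hζ : IsPrimitiveRoot ζ p)
    (c : ℕ → ℕ)
    (hc : (∑ j ∈ Finset.range p, (c j : ℂ) * ζ ^ j) / (p : ℂ)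
      ∈ Algebra.adjoin ℤ ({ζ} : Set ℂ)) :
    ∀ j < p, ∀ j' < p, (p : ℤ) ∣ (c j : ℤ) - (c j' : ℤ) := by
  have hp : p.Prime := Fact.out
  have hp0 : 0 < p := hp.pos
  have hpC : (p : ℂ) ≠ 0 := Nat.cast_ne_zero.mpr hp0.ne'
  set S : ℂ := ∑ j ∈ Finset.range p, (c j : ℂ) * ζ ^ j with hS
  rw [Algebra.adjoin_singleton_eq_range_aeval] at hc
  obtain ⟨P, hP⟩ := hc
  replace hP : aeval ζ P = S / (p : ℂ) := hP
  have hSP : S = (p : ℂ) * aeval ζ P := by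
    rw [hP]; field_simp
  -- reduce P mod X^p - 1
  have hm : (X^p - (1:ℤ[X])).Monic := by
    simpa using monic_X_pow_sub_C (1:ℤ) hp0.ne'
  set P' : ℤ[X] := P %ₘ (X^p - 1) with hP'
  have hdegP' : P'.degree < (p : WithBot ℕ) := by
    have h2 := degree_modByMonic_lt P hm
    have h3 : (X^p - (1:ℤ[X])).degree = (p : WithBot ℕ) := by
      simpa using degree_X_pow_sub_C hp0 (1:ℤ)
    rwa [h3] at h2
  have haevalP' : aeval ζ P' = aeval ζ P := by
    conv_rhs => rw [← modByMonic_add_div P (X^p - 1)]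
    simp [hζ.pow_eq_one, hP']
  -- the integer polynomial Q
  set Cp : ℤ[X] := ∑ j ∈ Finset.range p, C (c j : ℤ) * X ^ j with hCp
  have hCpcoeff : ∀ k, Cp.coeff k = if k < p then (c k : ℤ) else 0 := by
    intro k
    rw [hCp, finset_sum_coeff]
    simp only [coeff_C_mul, coeff_X_pow, mul_ite, mul_one, mul_zero]
    split
    · next hk =>
        rw [Finset.sum_eq_single k (fun b _ hb => by simp [Ne.symm hb]) (by simp [hk])]
        simp
    · next hk =>
      refine Finset.sum_eq_zero fun b hb => ?_
      have : k ≠ b := by rw [Finset.mem_range] at hb; omega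
      simp [this]
  set Q : ℤ[X] := Cp - C (p : ℤ) * P' with hQ
  have haevalCp : aeval ζ Cp = S := by
    rw [hCp, hS, map_sum]
    refine Finset.sum_congr rfl fun j _ => ?_
    simp
  have haevalQ : aeval ζ Q = 0 := by
    rw [hQ, map_sub, haevalCp, map_mul, aeval_C, haevalP', hSP]
    simp
  have hdegQ : Q.degree < (p : WithBot ℕ) := by
    rw [degree_lt_iff_coeff_zero]
    intro m hm'
    have hmp : p ≤ m := by exact_mod_cast hm'
    rw [hQ, coeff_sub, hCpcoeff, coeff_C_mul,
      coeff_eq_zero_of_degree_lt (lt_of_lt_of_le hdegP' (by exact_mod_cast hm'))]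
    simp [Nat.not_lt.mpr hmp]
  -- pass to ℚ
  set Qq : ℚ[X] := Q.map (algebraMap ℤ ℚ) with hQq
  have haevalQq : aeval ζ Qq = 0 := by rw [hQq, aeval_map_algebraMap, haevalQ]
  have hdegQq : Qq.degree < (p : WithBot ℕ) := lt_of_le_of_lt degree_map_le hdegQ
  have hdvd : minpoly ℚ ζ ∣ Qq := minpoly.dvd ℚ ζ haevalQq
  rw [← cyclotomic_eq_minpoly_rat hζ hp0] at hdvd
  obtain ⟨T, hT⟩ := hdvd
  have hdegc : (cyclotomic p ℚ).degree = ((p - 1 : ℕ) : WithBot ℕ) := by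
    rw [degree_cyclotomic, Nat.totient_prime hp]
  have hTc : T = C (T.coeff 0) := by
    rcases eq_or_ne T 0 with rfl | hT0
    · simp
    · apply eq_C_of_degree_le_zero
      have hmul := degree_mul (p := cyclotomic p ℚ) (q := T)
      rw [← hT, hdegc] at hmul
      have h1 : T.degree < 1 := by
        by_contra hcon
        push_neg at hcon
        have : (p:WithBot ℕ) ≤ Qq.degree := by
          rw [hmul]
          calc ((p:ℕ):WithBot ℕ) = ((p-1:ℕ):WithBot ℕ) + 1 := by
                rw [show (p:WithBot ℕ) = (((p-1)+1 : ℕ) : WithBot ℕ) by congr 1; omega,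
                    Nat.cast_add, Nat.cast_one]
            _ ≤ ((p-1:ℕ):WithBot ℕ) + T.degree := by gcongr
        exact absurd hdegQq (not_lt.mpr this)
      exact Nat.WithBot.lt_one_iff_le_zero.mp h1
  have hcoeffQq : ∀ j < p, Qq.coeff j = T.coeff 0 := by
    intro j hj
    rw [hT, hTc, cyclotomic_prime, Finset.sum_mul]
    simp [finset_sum_coeff, coeff_C_mul, coeff_X_pow, Finset.sum_ite_eq, hj]
  intro j hj j' hj'
  have heq : Q.coeff j = Q.coeff j' := by
    have e1 : ((Q.coeff j : ℚ)) = ((Q.coeff j' : ℚ)) := by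
      have a1 := hcoeffQq j hj
      have a2 := hcoeffQq j' hj'
      rw [hQq, coeff_map] at a1 a2
      simp only [eq_intCast] at a1 a2 ⊢
      rw [a1, a2]
    exact_mod_cast e1
  rw [hQ, coeff_sub, coeff_sub, hCpcoeff, hCpcoeff, if_pos hj, if_pos hj',
    coeff_C_mul, coeff_C_mul] at heq
  have : (c j : ℤ) - (c j' : ℤ) = p * (P'.coeff j - P'.coeff j') := by linarith
  exact ⟨_, this⟩

/-- A permutation `I` of `Irr(ℤ/pℤ)` such that `∑_r I(χ_r)(m) χ_r(n) ∈ p·ℤ[ζ]` for all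
nonzero `m, n` is of the form `χ ↦ λ·(χ∘σ)` for a linear character `λ` and an
automorphism `σ` (multiplication by a unit `u`). -/
theorem perfect_perm_is_affine (p : ℕ) [Fact p.Prime] (ζ : ℂ)
    (hζ : IsPrimitiveRoot ζ p) (f : Equiv.Perm (ZMod p))
    (h : ∀ m n : ZMod p, m ≠ 0 → n ≠ 0 →
      (∑ r : ZMod p, chi p ζ (f r) m * chi p ζ r n) / (p : ℂ)
        ∈ Algebra.adjoin ℤ ({ζ} : Set ℂ)) :
    ∃ (a : ZMod p) (u : (ZMod p)ˣ), ∀ (r h : ZMod p),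
      chi p ζ (f r) h = chi p ζ a h * chi p ζ r ((u : ZMod p) * h) := by
  have hp : p.Prime := Fact.out
  have key : ∀ x y : ZMod p, ζ ^ x.val * ζ ^ y.val = ζ ^ (x + y).val := by
    intro x y
    rw [ZMod.val_add, ← pow_add]
    conv_lhs => rw [← Nat.div_add_mod (x.val + y.val) p]
    rw [pow_add, pow_mul, hζ.pow_eq_one, one_pow, one_mul]
  have h01 : (0 : ZMod p) ≠ 1 := zero_ne_one
  set n : ZMod p := f 0 - f 1 with hn
  have hn0 : n ≠ 0 := sub_ne_zero.mpr (fun e => h01 (f.injective e))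
  set g : ZMod p → ZMod p := fun r => f r + r * n with hg
  -- rewrite the sum from h
  have hsum : (∑ r : ZMod p, chi p ζ (f r) 1 * chi p ζ r n)
      = ∑ j ∈ Finset.range p,
          (((Finset.univ.filter fun r => (g r).val = j).card : ℕ) : ℂ) * ζ ^ j := by
    have e1 : ∀ r : ZMod p, chi p ζ (f r) 1 * chi p ζ r n = ζ ^ (g r).val := by
      intro r
      unfold chi
      rw [mul_one]
      exact key _ _
    rw [Finset.sum_congr rfl fun r _ => e1 r,
      ← Finset.sum_fiberwise_of_maps_to (fun r _ => Finset.mem_range.mpr ((g r).val_lt))]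
    refine Finset.sum_congr rfl fun j _ => ?_
    rw [Finset.sum_congr rfl fun r hr => by
          rw [(Finset.mem_filter.mp hr).2], Finset.sum_const, nsmul_eq_mul]
  set c : ℕ → ℕ := fun j => (Finset.univ.filter fun r => (g r).val = j).card with hcdef
  have hcong : ∀ j < p, ∀ j' < p, (p : ℤ) ∣ (c j : ℤ) - (c j' : ℤ) := by
    apply count_cong p ζ hζ
    have := h 1 n one_ne_zero hn0
    rwa [hsum] at this
  have hcsum : ∑ j ∈ Finset.range p, c j = p := by
    rw [hcdef]
    rw [← Finset.card_eq_sum_card_fiberwise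
      (fun r (_ : r ∈ Finset.univ) => Finset.mem_range.mpr ((g r).val_lt))]
    simp [ZMod.card]
  -- the fiber over (f 0).val has ≥ 2 elements
  set k₀ : ℕ := (f 0).val with hk₀
  have hg0 : g 0 = f 0 := by simp [hg]
  have hg1 : g 1 = f 0 := by simp [hg, hn]
  have h2le : 2 ≤ c k₀ := by
    have hsubset : ({0, 1} : Finset (ZMod p)) ⊆
        (Finset.univ.filter fun r => (g r).val = k₀) := by
      intro x hx
      simp only [Finset.mem_insert, Finset.mem_singleton] at hx
      rcases hx with rfl | rfl <;> simp [hg0, hg1, hk₀]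
    calc 2 = ({0, 1} : Finset (ZMod p)).card := by
            rw [Finset.card_insert_of_notMem (by simpa using h01), Finset.card_singleton]
      _ ≤ _ := Finset.card_le_card hsubset
  have hk₀lt : k₀ < p := (f 0).val_lt
  have hckle : c k₀ ≤ p := by
    rw [← hcsum]
    exact Finset.single_le_sum (fun j _ => Nat.zero_le _) (Finset.mem_range.mpr hk₀lt)
  -- show c k₀ = p
  have hck : c k₀ = p := by
    by_contra hne
    have hlt : c k₀ < p := lt_of_le_of_ne hckle hne
    -- there must exist a zero fiber
    have hzero : ∃ j ∈ Finset.range p, c j = 0 := by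
      by_contra hz
      push_neg at hz
      have hsplit : ∑ j ∈ Finset.range p, c j
          = ∑ j ∈ Finset.range p \ {k₀}, c j + c k₀ :=
        Finset.sum_eq_sum_sdiff_singleton_add (Finset.mem_range.mpr hk₀lt) c
      have hbound : (Finset.range p \ {k₀}).card • 1 ≤ ∑ j ∈ Finset.range p \ {k₀}, c j :=
        Finset.card_nsmul_le_sum _ _ _
          (fun j hj => Nat.one_le_iff_ne_zero.mpr (hz j (Finset.mem_sdiff.mp hj).1))
      have hcard : (Finset.range p \ {k₀}).card = p - 1 := by
        rw [Finset.card_sdiff_of_subset (by simp [Finset.mem_range.mpr hk₀lt]),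
          Finset.card_range, Finset.card_singleton]
      rw [hcsum] at hsplit
      rw [hcard, smul_eq_mul, mul_one] at hbound
      have := hp.two_le
      omega
    obtain ⟨j, hj, hcj⟩ := hzero
    have hdvd := hcong k₀ hk₀lt j (Finset.mem_range.mp hj)
    rw [hcj] at hdvd
    simp only [Nat.cast_zero, sub_zero] at hdvd
    have : (p : ℤ) ∣ (c k₀ : ℤ) := hdvd
    have := Int.le_of_dvd (by exact_mod_cast Nat.lt_of_lt_of_le Nat.zero_lt_two h2le) this
    omega
  -- conclude g is constant
  have hgconst : ∀ r : ZMod p, g r = f 0 := by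
    have : (Finset.univ.filter fun r => (g r).val = k₀) = Finset.univ := by
      apply Finset.eq_univ_of_card
      rw [show (Finset.univ.filter fun r => (g r).val = k₀).card = c k₀ from rfl, hck,
        ZMod.card]
    intro r
    have hr : (g r).val = k₀ := by
      have := Finset.mem_filter.mp (this ▸ Finset.mem_univ r)
      exact this.2
    exact ZMod.val_injective p (by rw [hr, hk₀])
  -- extract affine form
  have hu : f 1 - f 0 ≠ 0 := sub_ne_zero.mpr fun e => h01 (f.injective e.symm)
  refine ⟨f 0, Units.mk0 _ hu, fun r h' => ?_⟩
  have hfr : f r = f 0 + r * (f 1 - f 0) := by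
    have h1 : f r + r * n = f 0 := hgconst r
    have h2 : f r = f 0 - r * n := by linear_combination h1
    rw [h2, hn]; ring
  have harg : f r * h' = f 0 * h' + r * ((Units.mk0 _ hu : (ZMod p)ˣ) * h') := by
    rw [Units.val_mk0, hfr]; ring
  unfold chi
  rw [key, harg]
end
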